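/- Let d ≥ 4 and c ≤ 2^d be positive integers and V a finite set with |V| ≥ d. For every hereditary family H ⊆ 2^V with |H| ≥ 2^d − c, we have ∑_{H ∈ H} 1/(|H|+1) ≥ W(2^d − c). Moreover, if H has e non-isolated vertices with e > d, then ∑_{H ∈ H} 1/(|H|+1) ≥ W(2^d − c) + (e−d)/6. -/

import Mathlib

open Finset

/-- The `k`-th finite subset of `ℕ⁺` in colexicographic order (zero-indexed). -/
def decodeSet (k : ℕ) : Finset ℕ :=
  ((Finset.range (k + 1)).filter (fun i => k.testBit i)).image (· + 1)

/-- `Rfam m`: the family of the first `m` finite subsets of `ℕ⁺` in colexicographic order. -/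
def Rfam (m : ℕ) : Finset (Finset ℕ) :=
  (Finset.range m).image decodeSet

/-- `W(m) = ∑_{R ∈ R(m)} 1/(|R|+1)`. -/
noncomputable def Wfun (m : ℕ) : ℝ :=
  ∑ R ∈ Rfam m, 1 / (R.card + 1)


def pc (n : ℕ) : ℕ := (Nat.digits 2 n).sum

lemma pc_rec (n : ℕ) : pc n = n % 2 + pc (n / 2) := by
  rcases Nat.eq_zero_or_pos n with rfl | h
  · simp [pc]
  · unfold pc
    rw [Nat.digits_def' (by norm_num) h]
    simp [List.sum_cons]

lemma pc_zero : pc 0 = 0 := by simp [pc]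

lemma pc_pow_add : ∀ (t k : ℕ), k < 2 ^ t → pc (2 ^ t + k) = pc k + 1 := by
  intro t
  induction t with
  | zero =>
    intro k hk
    interval_cases k
    simp [pc]
  | succ t ih =>
    intro k hk
    have h1 : (2 ^ (t+1) + k) % 2 = k % 2 := by
      have : 2 ^ (t+1) = 2 * 2 ^ t := by ring
      omega
    have h2 : (2 ^ (t+1) + k) / 2 = 2 ^ t + k / 2 := by
      have : 2 ^ (t+1) = 2 * 2 ^ t := by ring
      omega
    have h3 : k / 2 < 2 ^ t := by
      have : 2 ^ (t+1) = 2 * 2 ^ t := by ring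
      omega
    rw [pc_rec (2 ^ (t+1) + k), h1, h2, ih _ h3, pc_rec k]
    ring

lemma pc_compl : ∀ (u k : ℕ), k < 2 ^ u → pc k + pc (2 ^ u - 1 - k) = u := by
  intro u
  induction u with
  | zero => intro k hk; interval_cases k; simp [pc]
  | succ u ih =>
    intro k hk
    have hpow : 2 ^ (u+1) = 2 * 2 ^ u := by ring
    have h1 : (2 ^ (u+1) - 1 - k) % 2 + k % 2 = 1 := by omega
    have h2 : (2 ^ (u+1) - 1 - k) / 2 = 2 ^ u - 1 - k / 2 := by omega
    have h3 : k / 2 < 2 ^ u := by omega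
    have := ih (k / 2) h3
    rw [pc_rec k, pc_rec (2 ^ (u+1) - 1 - k), h2]
    omega

lemma pc_le {u k : ℕ} (hk : k < 2 ^ u) : pc k ≤ u := by
  have := pc_compl u k hk
  omega

lemma pc_eq_zero : ∀ n, pc n = 0 → n = 0 := by
  intro n
  induction n using Nat.strong_induction_on with
  | _ n ih =>
    intro h
    rcases Nat.eq_zero_or_pos n with rfl | hn
    · rfl
    · rw [pc_rec n] at h
      have := ih (n / 2) (by omega) (by omega)
      omega

lemma pc_le_one : ∀ n, pc n ≤ 1 → n = 0 ∨ ∃ i, n = 2 ^ i := by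
  intro n
  induction n using Nat.strong_induction_on with
  | _ n ih =>
    intro h
    rcases Nat.eq_zero_or_pos n with rfl | hn
    · exact Or.inl rfl
    rw [pc_rec n] at h
    rcases Nat.even_or_odd n with he | ho
    · have hn2 : n % 2 = 0 := Nat.even_iff.mp he
      have hh : pc (n / 2) ≤ 1 := by omega
      rcases ih (n / 2) (by omega) hh with h0 | ⟨i, hi⟩
      · omega
      · right; exact ⟨i + 1, by rw [pow_succ]; omega⟩
    · have hn2 : n % 2 = 1 := Nat.odd_iff.mp ho
      have : pc (n / 2) = 0 := by omega
      have := pc_eq_zero _ this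
      right; exact ⟨0, by omega⟩

/-- count of `k` in `s` with `pc k + i ≤ j` -/
def cnt (i j : ℕ) (s : Finset ℕ) : ℕ := (s.filter (fun k => pc k + i ≤ j)).card

def C (i j m : ℕ) : ℕ := cnt i j (range m)

lemma C_zero (i j : ℕ) : C i j 0 = 0 := by simp [C, cnt]

lemma C_mono (i j : ℕ) {m m' : ℕ} (h : m ≤ m') : C i j m ≤ C i j m' :=
  card_le_card (filter_subset_filter _ (range_subset_range.mpr h))

lemma C_anti (i i' j m : ℕ) (h : i ≤ i') : C i' j m ≤ C i j m := by
  unfold C cnt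
  apply card_le_card
  apply monotone_filter_right
  intro k _ hk
  omega

lemma C_split (i j : ℕ) {a b : ℕ} (h : a ≤ b) :
    C i j b = C i j a + cnt i j (Ico a b) := by
  unfold C cnt
  rw [range_eq_Ico, ← Ico_union_Ico_eq_Ico (Nat.zero_le a) h, filter_union,
    card_union_of_disjoint]
  · rw [range_eq_Ico]
  exact disjoint_filter_filter (Ico_disjoint_Ico_consecutive 0 a b)

lemma cnt_shift (i j t r : ℕ) (hr : r ≤ 2 ^ t) :
    cnt i j (Ico (2 ^ t) (2 ^ t + r)) = C (i + 1) j r := by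
  unfold cnt C
  apply card_nbij' (fun k => k - 2 ^ t) (fun k => 2 ^ t + k)
  · intro k hk
    simp only [mem_coe, mem_filter, mem_Ico, mem_range, cnt] at *
    have hlt : k - 2 ^ t < 2 ^ t := by omega
    have := pc_pow_add t (k - 2 ^ t) hlt
    have : pc k = pc (k - 2 ^ t) + 1 := by
      rw [← this]; congr 1; omega
    omega
  · intro k hk
    simp only [mem_coe, mem_filter, mem_Ico, mem_range] at *
    have := pc_pow_add t k (by omega)
    omega
  · intro k hk; simp only [mem_coe, mem_filter, mem_Ico] at hk; dsimp only; omega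
  · intro k hk; dsimp only; omega

lemma C_pow_add (i j t r : ℕ) (hr : r ≤ 2 ^ t) :
    C i j (2 ^ t + r) = C i j (2 ^ t) + C (i + 1) j r := by
  rw [C_split i j (Nat.le_add_right (2 ^ t) r), cnt_shift i j t r hr]

lemma cnt_compl (u i j s b : ℕ) (hb : b ≤ 2 ^ u) (hsb : s ≤ b) :
    cnt i j (Ico s b) + cnt (j + 1) (u + i) (Ico (2 ^ u - b) (2 ^ u - s)) = b - s := by
  have key : cnt i j (Ico s b)
      = ((Ico (2 ^ u - b) (2 ^ u - s)).filter (fun k => ¬ (pc k + (j+1) ≤ u + i))).card := by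
    unfold cnt
    apply card_nbij' (fun k => 2 ^ u - 1 - k) (fun k => 2 ^ u - 1 - k)
    · intro k hk
      simp only [mem_coe, mem_filter, mem_Ico] at *
      have := pc_compl u k (by omega)
      constructor
      · omega
      · omega
    · intro k hk
      simp only [mem_coe, mem_filter, mem_Ico] at *
      have hk2 : 2 ^ u - 1 - k < 2 ^ u := by omega
      have h2 := pc_compl u (2 ^ u - 1 - k) hk2
      have hkk : 2 ^ u - 1 - (2 ^ u - 1 - k) = k := by omega
      rw [hkk] at h2
      omega
    · intro k hk; simp only [mem_coe, mem_filter, mem_Ico] at hk; dsimp only; omega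
    · intro k hk; simp only [mem_coe, mem_filter, mem_Ico] at hk; dsimp only; omega
  rw [key]
  unfold cnt
  rw [add_comm]
  rw [card_filter_add_card_filter_not]
  simp [Nat.card_Ico]
  omega

lemma NL : ∀ (n : ℕ), ∀ i j m0 m1, m1 ≤ m0 → m0 + m1 ≤ n →
    C i j (m0 + m1) ≤ C i j m0 + C (i + 1) j m1 := by
  intro n
  induction n using Nat.strong_induction_on with
  | _ n IH =>
    intro i j m0 m1 h1 hn
    rcases Nat.eq_zero_or_pos m1 with rfl | hm1pos
    · simp [C_zero]
    have hm0pos : 0 < m0 := lt_of_lt_of_le hm1pos h1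
    have subadd : ∀ i' j' x y, x + y < n → C i' j' (x + y) ≤ C i' j' x + C i' j' y := by
      intro i' j' x y hxy
      rcases le_total y x with h | h
      · have h2 := IH (x + y) hxy i' j' x y h le_rfl
        have h3 := C_anti i' (i' + 1) j' y (by omega)
        omega
      · rw [add_comm x y]
        have h2 := IH (y + x) (by omega) i' j' y x h le_rfl
        have h3 := C_anti i' (i' + 1) j' x (by omega)
        omega
    set N := m0 + m1 with hN
    have hNn : N ≤ n := hn
    have hN2 : 2 ≤ N := by omega
    set t := Nat.log 2 (N - 1) with ht
    have h2t : 2 ^ t < N := by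
      have h : 2 ^ t ≤ N - 1 := by rw [ht]; exact Nat.pow_log_le_self 2 (by omega)
      omega
    have h2t' : N ≤ 2 ^ (t + 1) := by
      have h : N - 1 < 2 ^ (t + 1) := by rw [ht]; exact Nat.lt_pow_succ_log_self one_lt_two _
      omega
    have hpow : 2 ^ (t + 1) = 2 * 2 ^ t := by ring
    rcases le_or_gt (2 ^ t) m0 with hc1 | hc2
    · -- Case 1 : m0 ≥ 2^t
      set a := m0 - 2 ^ t with ha
      set s := N - 2 ^ t with hs
      have e1 : C i j N = C i j (2 ^ t) + C (i + 1) j s := by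
        have : N = 2 ^ t + s := by omega
        rw [this, C_pow_add i j t s (by omega)]
      have e2 : C i j m0 = C i j (2 ^ t) + C (i + 1) j a := by
        have : m0 = 2 ^ t + a := by omega
        rw [this, C_pow_add i j t a (by omega)]
      have e3 : C (i + 1) j s ≤ C (i + 1) j a + C (i + 1) j m1 := by
        have : s = a + m1 := by omega
        rw [this]
        exact subadd (i + 1) j a m1 (by omega)
      omega
    · -- Case 2 : m0 < 2^t
      have htpos : 1 ≤ t := by
        by_contra hcon
        have : t = 0 := by omega
        rw [this] at hc2
        simp at hc2
        omega
      set u := t - 1 with hu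
      have htu : t = u + 1 := by omega
      have hpow2 : 2 ^ t = 2 * 2 ^ u := by rw [htu]; ring
      have hm0l : 2 ^ u < m0 := by omega
      set r := m0 - 2 ^ u with hr
      set s := N - 2 ^ t with hs
      have hr2 : r ≤ 2 ^ u := by omega
      have hs1 : 1 ≤ s := by omega
      have hsm1 : s < m1 := by omega
      have e1 : C i j N = C i j (2 ^ t) + C (i + 1) j s := by
        have : N = 2 ^ t + s := by omega
        rw [this, C_pow_add i j t s (by omega)]
      have e0 : C i j (2 ^ t) = C i j (2 ^ u) + C (i + 1) j (2 ^ u) := by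
        have : (2 : ℕ) ^ t = 2 ^ u + 2 ^ u := by omega
        rw [this, C_pow_add i j u (2 ^ u) le_rfl]
      have e2 : C i j m0 = C i j (2 ^ u) + C (i + 1) j r := by
        have : m0 = 2 ^ u + r := by omega
        rw [this, C_pow_add i j u r hr2]
      rcases le_or_gt m1 (2 ^ u) with hm1le | hm1gt
      · -- Subcase 2b
        set W1 := cnt (i + 1) j (Ico r (2 ^ u)) with hW1
        set W2 := cnt (i + 1) j (Ico s m1) with hW2
        have eW1 : C (i + 1) j (2 ^ u) = C (i + 1) j r + W1 := C_split (i + 1) j (by omega)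
        have eW2 : C (i + 1) j m1 = C (i + 1) j s + W2 := C_split (i + 1) j (by omega)
        set X := C (j + 1) (u + (i + 1)) (2 ^ u - r) with hX
        have compl1 : W1 + X = 2 ^ u - r := by
          have := cnt_compl u (i + 1) j r (2 ^ u) le_rfl (by omega)
          simpa [C, Nat.sub_self, ← range_eq_Ico, hX] using this
        set Y := cnt (j + 1) (u + (i + 1)) (Ico (2 ^ u - m1) (2 ^ u - s)) with hY
        have compl2 : W2 + Y = m1 - s := cnt_compl u (i + 1) j s m1 hm1le (by omega)
        have hYX : Y ≤ X := by
          have esplit : C (j + 1) (u + (i + 1)) (2 ^ u - s)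
              = C (j + 1) (u + (i + 1)) (2 ^ u - m1) + Y := C_split _ _ (by omega)
          have hsub : C (j + 1) (u + (i + 1)) (2 ^ u - s)
              ≤ C (j + 1) (u + (i + 1)) (2 ^ u - m1) + C (j + 1) (u + (i + 1)) (2 ^ u - r) := by
            have : 2 ^ u - s = (2 ^ u - m1) + (2 ^ u - r) := by omega
            rw [this]
            exact subadd _ _ _ _ (by omega)
          omega
        have hlen : 2 ^ u - r = m1 - s := by omega
        omega
      · -- Subcase 2a
        set b' := m1 - 2 ^ u with hb'
        have hb'r : b' ≤ r := by omega
        have e3 : C (i + 1) j m1 = C (i + 1) j (2 ^ u) + C (i + 2) j b' := by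
          have : m1 = 2 ^ u + b' := by omega
          rw [this, C_pow_add (i + 1) j u b' (by omega)]
        have e4 : C (i + 1) j s ≤ C (i + 1) j r + C (i + 2) j b' := by
          have : s = r + b' := by omega
          rw [this]
          exact IH (r + b') (by omega) (i + 1) j r b' hb'r le_rfl
        omega

lemma coreBase {α : Type*} [DecidableEq α] (H : Finset (Finset α)) (hHV : H ⊆ (∅ : Finset α).powerset) (i j : ℕ) :
    C i j H.card ≤ (H.filter (fun A => A.card + i ≤ j)).card := by
  rw [Finset.powerset_empty] at hHV
  rcases Finset.subset_singleton_iff.mp hHV with rfl | rfl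
  · simp [C_zero]
  · by_cases hij : i ≤ j
    · have h1 : C i j 1 ≤ 1 := by
        have : C i j 1 ≤ (range 1).card := by unfold C cnt; exact card_le_card (filter_subset _ _)
        simpa using this
      have h2 : ({(∅ : Finset α)} : Finset (Finset α)).filter (fun A => A.card + i ≤ j)
          = {(∅ : Finset α)} := by
        rw [filter_singleton]
        simp [hij]
      rw [card_singleton, h2, card_singleton]
      exact h1
    · have h2 : C i j 1 = 0 := by
        unfold C cnt
        rw [Finset.card_eq_zero, Finset.filter_eq_empty_iff]
        intro k hk
        simp only [mem_range] at hk
        interval_cases k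
        rw [pc_zero]
        omega
      simp [card_singleton, h2]

lemma core {α : Type*} [DecidableEq α] : ∀ (n : ℕ) (V : Finset α), V.card ≤ n → ∀ (H : Finset (Finset α)),
    H ⊆ V.powerset → (∀ A ∈ H, ∀ B ⊆ A, B ∈ H) → ∀ i j,
    C i j H.card ≤ (H.filter (fun A => A.card + i ≤ j)).card := by
  intro n
  induction n with
  | zero =>
    intro V hV H hHV hher i j
    have : V = ∅ := card_eq_zero.mp (by omega)
    subst this
    exact coreBase H hHV i j
  | succ n ih =>
    intro V hV H hHV hher i j
    rcases V.eq_empty_or_nonempty with rfl | ⟨v, hv⟩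
    · exact coreBase H hHV i j
    set H0 := H.filter (fun A => v ∉ A) with hH0
    set H1 := (H.filter (fun A => v ∈ A)).image (fun A => A.erase v) with hH1
    have hH0V : H0 ⊆ (V.erase v).powerset := by
      intro A hA
      rw [mem_powerset]
      rw [hH0, mem_filter] at hA
      exact Finset.subset_erase.mpr ⟨mem_powerset.mp (hHV hA.1), hA.2⟩
    have hH0her : ∀ A ∈ H0, ∀ B ⊆ A, B ∈ H0 := by
      intro A hA B hB
      rw [hH0, mem_filter] at *
      exact ⟨hher A hA.1 B hB, fun hvB => hA.2 (hB hvB)⟩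
    have hH1V : H1 ⊆ (V.erase v).powerset := by
      intro B hB
      rw [hH1, mem_image] at hB
      obtain ⟨A, hA, rfl⟩ := hB
      rw [mem_filter] at hA
      rw [mem_powerset]
      exact erase_subset_erase v (mem_powerset.mp (hHV hA.1))
    have hH1her : ∀ B ∈ H1, ∀ B' ⊆ B, B' ∈ H1 := by
      intro B hB B' hB'
      rw [hH1, mem_image] at hB ⊢
      obtain ⟨A, hA, rfl⟩ := hB
      rw [mem_filter] at hA
      have hvB' : v ∉ B' := fun h => notMem_erase v A (hB' h)
      have hsub : insert v B' ⊆ A :=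
        insert_subset hA.2 (hB'.trans (erase_subset v A))
      refine ⟨insert v B', ?_, ?_⟩
      · rw [mem_filter]
        exact ⟨hher A hA.1 _ hsub, mem_insert_self v B'⟩
      · rw [erase_insert hvB']
    have hinj : Set.InjOn (fun A => Finset.erase A v) ↑(H.filter (fun A => v ∈ A)) := by
      intro A hA A' hA' he
      simp only [Finset.coe_filter, Set.mem_setOf_eq] at hA hA'
      rw [← insert_erase hA.2, ← insert_erase hA'.2]
      simp only at he
      rw [he]
    have hcards : H.card = H0.card + H1.card := by
      have h1 : H1.card = (H.filter (fun A => v ∈ A)).card := card_image_of_injOn hinj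
      have h2 := card_filter_add_card_filter_not (s := H) (p := fun A => v ∈ A)
      rw [hH0]
      omega
    have hsub01 : H1 ⊆ H0 := by
      intro B hB
      rw [hH1, mem_image] at hB
      obtain ⟨A, hA, rfl⟩ := hB
      rw [mem_filter] at hA
      rw [hH0, mem_filter]
      exact ⟨hher A hA.1 _ (erase_subset v A), notMem_erase v A⟩
    have hm10 : H1.card ≤ H0.card := card_le_card hsub01
    have hVe : (V.erase v).card ≤ n := by
      have := card_erase_of_mem hv
      have := card_pos.mpr ⟨v, hv⟩
      omega
    have IH0 := ih (V.erase v) hVe H0 hH0V hH0her i j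
    have IH1 := ih (V.erase v) hVe H1 hH1V hH1her (i + 1) j
    have hNL := NL (H0.card + H1.card) i j H0.card H1.card hm10 le_rfl
    -- split the filtered count of H
    have hsplit := card_filter_add_card_filter_not
      (s := H.filter (fun A => A.card + i ≤ j)) (p := fun A => v ∈ A)
    have e1 : (H.filter (fun A => A.card + i ≤ j)).filter (fun A => ¬ v ∈ A)
        = H0.filter (fun A => A.card + i ≤ j) := by
      rw [hH0, filter_filter, filter_filter]
      apply filter_congr
      intro A hA
      tauto
    have e2 : ((H.filter (fun A => A.card + i ≤ j)).filter (fun A => v ∈ A)).card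
        = (H1.filter (fun B => B.card + (i + 1) ≤ j)).card := by
      apply card_nbij' (fun A => A.erase v) (fun B => insert v B)
      · intro A hA
        simp only [mem_coe, mem_filter] at hA ⊢
        obtain ⟨⟨hAH, hAc⟩, hAv⟩ := hA
        have hc1 : 1 ≤ A.card := card_pos.mpr ⟨v, hAv⟩
        have hce := card_erase_of_mem hAv
        constructor
        · rw [hH1, mem_image]
          exact ⟨A, by rw [mem_filter]; exact ⟨hAH, hAv⟩, rfl⟩
        · omega
      · intro B hB
        simp only [mem_coe, mem_filter] at hB ⊢
        obtain ⟨hBH1, hBc⟩ := hB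
        rw [hH1, mem_image] at hBH1
        obtain ⟨A, hA, rfl⟩ := hBH1
        rw [mem_filter] at hA
        rw [insert_erase hA.2]
        have hc1 : 1 ≤ A.card := card_pos.mpr ⟨v, hA.2⟩
        have hce := card_erase_of_mem hA.2
        exact ⟨⟨hA.1, by omega⟩, hA.2⟩
      · intro A hA
        simp only [mem_coe, mem_filter] at hA
        exact insert_erase hA.2
      · intro B hB
        simp only [mem_coe, mem_filter] at hB
        rw [hH1, mem_image] at hB
        obtain ⟨⟨A, hA, rfl⟩, _⟩ := hB
        exact erase_insert (notMem_erase v A)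
    have efinal : (H.filter (fun A => A.card + i ≤ j)).card
        = (H0.filter (fun A => A.card + i ≤ j)).card
          + (H1.filter (fun B => B.card + (i + 1) ≤ j)).card := by
      rw [← hsplit, e2]
      rw [e1] at hsplit ⊢
      omega
    rw [hcards, efinal]
    exact hNL.trans (add_le_add IH0 IH1)

lemma card_testBit : ∀ (B k : ℕ), k < 2 ^ B →
    ((range B).filter (fun i => k.testBit i)).card = pc k := by
  intro B
  induction B with
  | zero => intro k hk; interval_cases k; simp [pc_zero]
  | succ B ih =>
    intro k hk
    have hpow : 2 ^ (B + 1) = 2 * 2 ^ B := by ring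
    rw [card_filter, Finset.sum_range_succ']
    have h2 : (∑ i ∈ range B, if k.testBit (i + 1) then 1 else 0) = pc (k / 2) := by
      rw [Finset.sum_congr rfl (fun i _ => by rw [Nat.testBit_succ])]
      rw [← card_filter]
      exact ih (k / 2) (by omega)
    have h3 : (if k.testBit 0 then (1 : ℕ) else 0) = k % 2 := by
      rw [Nat.testBit_zero]
      rcases Nat.mod_two_eq_zero_or_one k with h | h <;> simp [h]
    rw [h2, h3, pc_rec k]
    omega

lemma decodeSet_card (k : ℕ) : (decodeSet k).card = pc k := by
  unfold decodeSet
  rw [card_image_of_injective _ (fun a b h => by simpa using h : Function.Injective (· + 1))]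
  have h1 := Nat.lt_two_pow_self (n := k)
  have h2 : (2:ℕ) ^ k ≤ 2 ^ (k + 1) := Nat.pow_le_pow_right (by norm_num) (by omega)
  exact card_testBit (k + 1) k (by omega)

lemma decodeSet_inj : Function.Injective decodeSet := by
  intro k1 k2 h
  apply Nat.eq_of_testBit_eq
  intro i
  have hmem : ∀ k : ℕ, (k.testBit i = true) ↔ (i + 1) ∈ decodeSet k := by
    intro k
    unfold decodeSet
    simp only [Finset.mem_image, mem_filter, mem_range]
    constructor
    · intro hb
      have hik : ¬ k < 2 ^ i := fun hlt => by
        rw [Nat.testBit_lt_two_pow hlt] at hb; exact Bool.false_ne_true hb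
      have h2i := Nat.lt_two_pow_self (n := i)
      exact ⟨i, ⟨by omega, hb⟩, rfl⟩
    · rintro ⟨a, ⟨ha1, ha2⟩, ha3⟩
      have : a = i := by omega
      subst this
      exact ha2
  rw [Bool.eq_iff_iff, hmem k1, hmem k2, h]

lemma layer {ι : Type*} (f : ℕ → ℝ) (T : Finset ι) (s : ι → ℕ) (u : ℕ)
    (hs : ∀ x ∈ T, s x ≤ u) :
    ∑ x ∈ T, f (s x) = T.card * f u
      + ∑ j ∈ range u, (f j - f (j + 1)) * ((T.filter (fun x => s x ≤ j)).card) := by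
  have key : ∀ a, a ≤ u →
      f a = f u + ∑ j ∈ range u, (f j - f (j + 1)) * (if a ≤ j then (1:ℝ) else 0) := by
    intro a ha
    have e1 : ∑ j ∈ range u, (f j - f (j + 1)) * (if a ≤ j then (1:ℝ) else 0)
        = ∑ j ∈ Ico a u, (f j - f (j + 1)) := by
      rw [Finset.sum_congr rfl (fun j _ => by
        rcases le_or_gt a j with h | h
        · simp [h]
        · simp [Nat.not_le.mpr h] : ∀ j ∈ range u, (f j - f (j + 1)) * (if a ≤ j then (1:ℝ) else 0)
            = if a ≤ j then (f j - f (j + 1)) else 0)]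
      rw [← Finset.sum_filter]
      congr 1
      ext j
      simp only [mem_filter, mem_range, mem_Ico]
      omega
    have e2 : ∑ j ∈ Ico a u, (f j - f (j + 1)) = f a - f u := by
      rw [Finset.sum_Ico_eq_sub _ ha, Finset.sum_range_sub' f, Finset.sum_range_sub' f]
      ring
    rw [e1, e2]
    ring
  calc ∑ x ∈ T, f (s x)
      = ∑ x ∈ T, (f u + ∑ j ∈ range u, (f j - f (j + 1)) * (if s x ≤ j then (1:ℝ) else 0)) :=
        Finset.sum_congr rfl (fun x hx => key _ (hs x hx))
    _ = T.card * f u + ∑ x ∈ T, ∑ j ∈ range u, (f j - f (j + 1)) * (if s x ≤ j then (1:ℝ) else 0) := by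
        rw [Finset.sum_add_distrib, Finset.sum_const, nsmul_eq_mul]
    _ = T.card * f u + ∑ j ∈ range u, (f j - f (j + 1)) * ((T.filter (fun x => s x ≤ j)).card) := by
        rw [Finset.sum_comm]
        congr 1
        apply Finset.sum_congr rfl
        intro j _
        rw [← Finset.mul_sum]
        congr 1
        rw [Finset.sum_boole]

lemma Wfun_eq (m : ℕ) : Wfun m = ∑ k ∈ range m, (1 : ℝ) / (pc k + 1) := by
  unfold Wfun Rfam
  rw [Finset.sum_image (fun x _ y _ h => decodeSet_inj h)]
  exact Finset.sum_congr rfl (fun k _ => by rw [decodeSet_card])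

/-- a hereditary family `H ⊆ 2^V` with `|H| ≥ 2^d - c` satisfies
`∑_{H ∈ H} 1/(|H|+1) ≥ W(2^d - c)`, and moreover `≥ W(2^d - c) + (e - d)/6`
if `H` has `e > d` non-isolated vertices. -/
theorem stmt_7 {α : Type*} [DecidableEq α] (d c : ℕ) (hd : 4 ≤ d) (hc1 : 1 ≤ c)
    (hc : c ≤ 2 ^ d)
    (V : Finset α) (hV : d ≤ V.card)
    (H : Finset (Finset α)) (hHV : H ⊆ V.powerset)
    (hered : ∀ A ∈ H, ∀ B ⊆ A, B ∈ H)
    (hcard : 2 ^ d - c ≤ H.card) :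
    Wfun (2 ^ d - c) ≤ ∑ A ∈ H, (1 : ℝ) / (A.card + 1)
    ∧ ∀ e : ℕ, e = (V.filter (fun v => ∃ A ∈ H, v ∈ A)).card → d < e →
        Wfun (2 ^ d - c) + ((e : ℝ) - d) / 6 ≤ ∑ A ∈ H, (1 : ℝ) / (A.card + 1) := by
  set M := 2 ^ d - c with hM
  set u := V.card with hu
  set f : ℕ → ℝ := fun n => 1 / (n + 1) with hf
  have hfpos : ∀ n : ℕ, 0 < f n := fun n => by
    rw [hf]; positivity
  have hfmono : ∀ n : ℕ, f (n + 1) ≤ f n := by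
    intro n
    rw [hf]
    simp only
    apply one_div_le_one_div_of_le (by positivity)
    push_cast
    linarith
  have hMle : M ≤ 2 ^ d := by omega
  have hud : d ≤ u := hV
  have hpowdu : (2:ℕ) ^ d ≤ 2 ^ u := Nat.pow_le_pow_right (by norm_num) hud
  have hcardle : ∀ A ∈ H, A.card ≤ u := fun A hA => card_le_card (mem_powerset.mp (hHV hA))
  have hpcle : ∀ k ∈ range M, pc k ≤ u := by
    intro k hk
    rw [mem_range] at hk
    exact pc_le (u := u) (by omega)
  -- layer-cake on both sides
  have hL : ∑ A ∈ H, f A.card = H.card * f u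
      + ∑ j ∈ range u, (f j - f (j + 1)) * ((H.filter (fun A => A.card ≤ j)).card) :=
    layer f H Finset.card u hcardle
  have hgoalsum : ∑ A ∈ H, (1 : ℝ) / (A.card + 1) = ∑ A ∈ H, f A.card :=
    Finset.sum_congr rfl (fun A _ => by rw [hf])
  have hCU : ∀ j, ((range M).filter (fun k => pc k ≤ j)).card = C 0 j M := by
    intro j
    unfold C cnt
    congr 1
  have hR : Wfun M = M * f u + ∑ j ∈ range u, (f j - f (j + 1)) * ((C 0 j M : ℝ)) := by
    rw [Wfun_eq]
    have h1 : ∑ k ∈ range M, (1 : ℝ) / (pc k + 1) = ∑ k ∈ range M, f (pc k) :=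
      Finset.sum_congr rfl (fun k _ => by rw [hf])
    rw [h1, layer f (range M) pc u hpcle, card_range]
    congr 1
  -- core bound
  have hN : ∀ j, C 0 j M ≤ (H.filter (fun A => A.card ≤ j)).card := by
    intro j
    have h1 : C 0 j M ≤ C 0 j H.card := C_mono 0 j hcard
    have h2 := core u V le_rfl H hHV hered 0 j
    have h3 : (H.filter (fun A => A.card + 0 ≤ j)).card
        = (H.filter (fun A => A.card ≤ j)).card := by
      congr 1
    omega
  have hHM : (M : ℝ) * f u ≤ (H.card : ℝ) * f u := by
    apply mul_le_mul_of_nonneg_right _ (hfpos u).le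
    exact_mod_cast hcard
  have hterm : ∀ j ∈ range u, (0:ℝ) ≤ (f j - f (j + 1)) *
      (((H.filter (fun A => A.card ≤ j)).card : ℝ) - (C 0 j M : ℝ)) := by
    intro j _
    apply mul_nonneg (sub_nonneg.mpr (hfmono j))
    have := hN j
    have h : (C 0 j M : ℝ) ≤ ((H.filter (fun A => A.card ≤ j)).card : ℝ) := by
      exact_mod_cast this
    linarith
  have hdiff : ∑ j ∈ range u, (f j - f (j + 1)) * (((H.filter (fun A => A.card ≤ j)).card : ℝ))
      - ∑ j ∈ range u, (f j - f (j + 1)) * ((C 0 j M : ℝ))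
      = ∑ j ∈ range u, (f j - f (j + 1)) *
          (((H.filter (fun A => A.card ≤ j)).card : ℝ) - (C 0 j M : ℝ)) := by
    rw [← Finset.sum_sub_distrib]
    apply Finset.sum_congr rfl
    intro j _
    ring
  have hdiffnn : (0:ℝ) ≤ ∑ j ∈ range u, (f j - f (j + 1)) *
      (((H.filter (fun A => A.card ≤ j)).card : ℝ) - (C 0 j M : ℝ)) :=
    Finset.sum_nonneg hterm
  constructor
  · rw [hgoalsum, hL, hR]
    linarith
  · intro e he hde
    -- the singletons of non-isolated vertices
    set S := V.filter (fun v => ∃ A ∈ H, v ∈ A) with hS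
    have hSne : S.Nonempty := by
      rw [← card_pos, ← he]; omega
    have hHne : ∅ ∈ H := by
      obtain ⟨v, hv⟩ := hSne
      rw [hS, mem_filter] at hv
      obtain ⟨A, hA, _⟩ := hv.2
      exact hered A hA ∅ (empty_subset A)
    have hsing : ∀ v ∈ S, ({v} : Finset α) ∈ H := by
      intro v hv
      rw [hS, mem_filter] at hv
      obtain ⟨A, hA, hvA⟩ := hv.2
      exact hered A hA {v} (singleton_subset_iff.mpr hvA)
    have hsubset : insert ∅ (S.image (fun v => ({v} : Finset α)))
        ⊆ H.filter (fun A => A.card ≤ 1) := by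
      intro B hB
      rw [mem_insert] at hB
      rcases hB with rfl | hB
      · rw [mem_filter]
        exact ⟨hHne, by simp⟩
      · rw [mem_image] at hB
        obtain ⟨v, hv, rfl⟩ := hB
        rw [mem_filter]
        exact ⟨hsing v hv, by simp⟩
    have hecard : (insert ∅ (S.image (fun v => ({v} : Finset α)))).card = e + 1 := by
      rw [card_insert_of_notMem (by
        rw [mem_image]
        rintro ⟨v, _, hcon⟩
        exact Finset.singleton_ne_empty v hcon)]
      rw [card_image_of_injective _ Finset.singleton_injective, ← he]
    have hN1 : e + 1 ≤ (H.filter (fun A => A.card ≤ 1)).card := by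
      rw [← hecard]
      exact card_le_card hsubset
    -- bound on C 0 1 M
    have hU1 : C 0 1 M ≤ d + 1 := by
      have hsub : (range M).filter (fun k => pc k + 0 ≤ 1)
          ⊆ insert 0 ((range d).image (fun i => 2 ^ i)) := by
        intro k hk
        simp only [mem_filter, mem_range] at hk
        rcases pc_le_one k (by omega) with rfl | ⟨i, rfl⟩
        · exact mem_insert_self _ _
        · apply mem_insert_of_mem
          rw [mem_image]
          refine ⟨i, ?_, rfl⟩
          rw [mem_range]
          rw [← Nat.pow_lt_pow_iff_right (a := 2) (by norm_num)]
          omega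
      calc C 0 1 M ≤ (insert 0 ((range d).image (fun i => 2 ^ i))).card :=
            card_le_card hsub
        _ ≤ ((range d).image (fun i => 2 ^ i)).card + 1 := card_insert_le _ _
        _ ≤ d + 1 := by
            have := card_image_le (s := range d) (f := fun i => 2 ^ i)
            rw [card_range] at this
            omega
    have h1mem : 1 ∈ range u := by rw [mem_range]; omega
    have hslack : (f 1 - f 2) * ((e:ℝ) - d) ≤ ∑ j ∈ range u, (f j - f (j + 1)) *
        (((H.filter (fun A => A.card ≤ j)).card : ℝ) - (C 0 j M : ℝ)) := by
      have h1 : (f 1 - f 2) * ((e:ℝ) - d) ≤ (f 1 - f 2) *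
          (((H.filter (fun A => A.card ≤ 1)).card : ℝ) - (C 0 1 M : ℝ)) := by
        apply mul_le_mul_of_nonneg_left _ (sub_nonneg.mpr (hfmono 1))
        have ha : ((e:ℝ) + 1) ≤ ((H.filter (fun A => A.card ≤ 1)).card : ℝ) := by
          exact_mod_cast hN1
        have hb : ((C 0 1 M : ℝ)) ≤ (d:ℝ) + 1 := by exact_mod_cast hU1
        linarith
      refine h1.trans ?_
      exact Finset.single_le_sum hterm h1mem
    have hf16 : f 1 - f 2 = 1 / 6 := by
      rw [hf]
      norm_num
    rw [hgoalsum, hL, hR]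
    rw [hf16] at hslack
    linarith
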